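/- Let M = (m_{ij}) be an n×n Hermitian positive-definite complex matrix. For each i ∈ {1,…,n} choose an index set J_i ⊆ {1,…,i} with i ∈ J_i, let S_i be the principal submatrix of M with rows and columns indexed by J_i, and let σ_i be the diagonal entry of S_i⁻¹ in the position corresponding to index i (so σ_i is a positive real number). Then det(M) ≤ Π_{i=1}^n (1/σ_i) ≤ Π_{i=1}^n m_{ii}. -/

import Mathlib

set_option linter.unusedSectionVars false
open Matrix
open scoped ComplexOrder

namespace Stmt11Aux
variable {m : Type*} [Fintype m] [DecidableEq m]

theorem star_single (i : m) : star ((Pi.single i (1:ℂ)) : m → ℂ) = Pi.single i (1:ℂ) := by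
  ext j; by_cases h : j = i <;> simp [Pi.single_apply, h]

theorem diag_pos {A : Matrix m m ℂ} (hA : A.PosDef) (i : m) : 0 < A i i := by
  have h := hA.dotProduct_mulVec_pos (x := Pi.single i 1) (by
    intro h
    have := congrFun h i
    simp [Pi.single_apply] at this)
  rw [mulVec_single] at h
  simpa [star_single, single_dotProduct] using h

noncomputable def wv (A : Matrix m m ℂ) (i : m) : m → ℂ := A⁻¹ *ᵥ Pi.single i 1

theorem wAy {A : Matrix m m ℂ} (hA : A.PosDef) (i : m) (y : m → ℂ) :
    star (wv A i) ⬝ᵥ (A *ᵥ y) = y i := by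
  have hdet : IsUnit A.det := hA.det_pos.ne'.isUnit
  rw [wv, star_mulVec, hA.isHermitian.inv, dotProduct_mulVec, vecMul_vecMul,
    nonsing_inv_mul A hdet, vecMul_one, star_single, single_dotProduct, one_mul]

theorem yAw {A : Matrix m m ℂ} (hA : A.PosDef) (i : m) (y : m → ℂ) :
    star y ⬝ᵥ (A *ᵥ wv A i) = star (y i) := by
  have hdet : IsUnit A.det := hA.det_pos.ne'.isUnit
  rw [wv, mulVec_mulVec, mul_nonsing_inv A hdet, one_mulVec, dotProduct_single, mul_one,
    Pi.star_apply]

theorem wAw {A : Matrix m m ℂ} (hA : A.PosDef) (i : m) :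
    star (wv A i) ⬝ᵥ (A *ᵥ wv A i) = A⁻¹ i i := by
  rw [wAy hA i, wv, mulVec_single]; simp



theorem inv_diag (hA : (A : Matrix m m ℂ).PosDef) (i : m) :
    0 < (A⁻¹ i i).re ∧ (A⁻¹ i i).im = 0 := by
  have h := diag_pos hA.inv i
  rw [Complex.lt_def] at h
  exact ⟨by simpa using h.1, by simpa using h.2.symm⟩

theorem one_div_le_quad {A : Matrix m m ℂ} (hA : A.PosDef) (i : m) (y : m → ℂ)
    (hy : y i = 1) : 1 / (A⁻¹ i i).re ≤ (star y ⬝ᵥ (A *ᵥ y)).re := by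
  obtain ⟨hre, him⟩ := inv_diag hA i
  set d := A⁻¹ i i with hd
  have hdr : d = ((d.re : ℝ) : ℂ) := by
    apply Complex.ext <;> simp [him]
  have hcc : star (d⁻¹ : ℂ) = d⁻¹ := by
    rw [hdr, ← Complex.ofReal_inv]; exact Complex.conj_ofReal _
  have hz := hA.posSemidef.dotProduct_mulVec_nonneg (y - d⁻¹ • wv A i)
  have h1 := wAy hA i y
  have h2 := yAw hA i y
  have h3 := wAw hA i
  have hexp : star (y - d⁻¹ • wv A i) ⬝ᵥ (A *ᵥ (y - d⁻¹ • wv A i))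
      = star y ⬝ᵥ (A *ᵥ y) - d⁻¹ := by
    simp only [star_sub, star_smul, mulVec_sub, mulVec_smul, sub_dotProduct,
      dotProduct_sub, smul_dotProduct, dotProduct_smul, smul_eq_mul, h1, h2, h3, hy, hcc,
      star_one, ← hd]
    have hdne : d ≠ 0 := by
      rw [hdr]; exact_mod_cast Complex.ofReal_ne_zero.mpr hre.ne'
    field_simp
    ring
  rw [hexp, sub_nonneg] at hz
  have := (Complex.le_def.mp hz).1
  have hinv : (d⁻¹).re = 1 / d.re := by
    rw [Complex.inv_re, Complex.normSq_apply, him]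
    field_simp
    ring
  rw [hinv] at this
  exact this

theorem exists_quad_eq {A : Matrix m m ℂ} (hA : A.PosDef) (i : m) :
    ∃ x : m → ℂ, x i = 1 ∧
      star x ⬝ᵥ (A *ᵥ x) = (((1 : ℝ) / (A⁻¹ i i).re : ℝ) : ℂ) := by
  obtain ⟨hre, him⟩ := inv_diag hA i
  set d := A⁻¹ i i with hd
  have hdr : d = ((d.re : ℝ) : ℂ) := by apply Complex.ext <;> simp [him]
  have hdne : d ≠ 0 := by
    rw [hdr]; exact_mod_cast Complex.ofReal_ne_zero.mpr hre.ne'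
  have hcc : star (d⁻¹ : ℂ) = d⁻¹ := by
    rw [hdr, ← Complex.ofReal_inv]; exact Complex.conj_ofReal _
  refine ⟨d⁻¹ • wv A i, ?_, ?_⟩
  · have : wv A i i = d := by rw [wv, mulVec_single]; simp [hd]
    simp [this, inv_mul_cancel₀ hdne]
  · have h3 := wAw hA i
    simp only [star_smul, mulVec_smul, smul_dotProduct, dotProduct_smul, smul_eq_mul, h3,
      hcc, ← hd]
    rw [hdr, ← Complex.ofReal_inv, ← Complex.ofReal_mul, ← Complex.ofReal_mul]
    congr 1
    field_simp
    rw [Complex.ofReal_re, div_self hre.ne']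



theorem det_updateRow_single (A : Matrix m m ℂ) (i : m) :
    (A.updateRow i (Pi.single i 1)).det
      = (A.submatrix (fun j : {j : m // j ≠ i} => (j : m))
          (fun j : {j : m // j ≠ i} => (j : m))).det := by
  classical
  set B := A.updateRow i (Pi.single i 1) with hB
  set e : {a : m // a ≠ i} ⊕ {a : m // ¬ a ≠ i} ≃ m :=
    Equiv.sumCompl (fun j : m => j ≠ i) with he
  have hel : ∀ a : {a : m // a ≠ i}, e (Sum.inl a) = ↑a := fun a => by
    rw [he]; exact Equiv.sumCompl_apply_inl _
  have her : ∀ a : {a : m // ¬ a ≠ i}, e (Sum.inr a) = ↑a := fun a => by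
    rw [he]; exact Equiv.sumCompl_apply_inr _
  rw [← Matrix.det_submatrix_equiv_self e B]
  rw [← Matrix.fromBlocks_toBlocks (B.submatrix e e)]
  have h21 : (B.submatrix e e).toBlocks₂₁ = 0 := by
    ext a b
    have ha : (a : m) = i := not_not.mp a.2
    simp only [Matrix.toBlocks₂₁, Matrix.submatrix_apply, Matrix.of_apply, hel, her,
      hB, ha, Matrix.updateRow_self, Matrix.zero_apply]
    exact Pi.single_eq_of_ne (M := fun _ : m => ℂ) b.2 1
  rw [h21, Matrix.det_fromBlocks_zero₂₁]
  have h22 : (B.submatrix e e).toBlocks₂₂.det = 1 := by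
    haveI : Subsingleton {j : m // ¬ j ≠ i} :=
      ⟨fun a b => Subtype.ext ((not_not.mp a.2).trans (not_not.mp b.2).symm)⟩
    rw [Matrix.det_eq_elem_of_subsingleton _ ⟨i, not_not.mpr rfl⟩]
    simp only [Matrix.toBlocks₂₂, Matrix.submatrix_apply, Matrix.of_apply, her, hB,
      Matrix.updateRow_self]
    exact Pi.single_eq_same i 1
  rw [h22, mul_one]
  congr 1
  ext a b
  simp only [Matrix.toBlocks₁₁, Matrix.submatrix_apply, Matrix.of_apply, hel, hB]
  rw [Matrix.updateRow_ne a.2]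

theorem det_mul_inv_diag {A : Matrix m m ℂ} (hA : A.PosDef) (i : m) :
    A.det * A⁻¹ i i
      = (A.submatrix (fun j : {j : m // j ≠ i} => (j : m))
          (fun j : {j : m // j ≠ i} => (j : m))).det := by
  have hdet : A.det ≠ 0 := by
    have := hA.det_pos
    intro h; rw [h] at this; exact lt_irrefl _ this
  rw [Matrix.inv_def, Matrix.smul_apply, Ring.inverse_eq_inv', smul_eq_mul, ← mul_assoc,
    mul_inv_cancel₀ hdet, one_mul, Matrix.adjugate_apply, det_updateRow_single]

variable {n : ℕ}

/-- principal submatrix -/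
noncomputable def psub (M : Matrix (Fin n) (Fin n) ℂ) (J : Finset (Fin n)) : Matrix J J ℂ :=
  M.submatrix (fun a : J => (a : Fin n)) (fun a : J => (a : Fin n))

/-- quadratic form restricted to an index set -/
noncomputable def Qf (M : Matrix (Fin n) (Fin n) ℂ) (J : Finset (Fin n)) (x : Fin n → ℂ) : ℂ :=
  ∑ a ∈ J, ∑ b ∈ J, star (x a) * (M a b * x b)

theorem quad_psub (M : Matrix (Fin n) (Fin n) ℂ) (J : Finset (Fin n)) (x : Fin n → ℂ) :
    star (fun a : J => x a) ⬝ᵥ (psub M J *ᵥ fun a : J => x a) = Qf M J x := by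
  rw [Qf, ← Finset.sum_coe_sort J (fun a => ∑ b ∈ J, star (x a) * (M a b * x b))]
  rw [dotProduct]
  refine Finset.sum_congr rfl fun a _ => ?_
  rw [← Finset.sum_coe_sort J (fun b => star (x (a : Fin n)) * (M (a : Fin n) b * x b))]
  rw [mulVec, dotProduct, Finset.mul_sum]
  rfl

theorem Qf_subset (M : Matrix (Fin n) (Fin n) ℂ) {S T : Finset (Fin n)} (hST : S ⊆ T)
    (x : Fin n → ℂ) (hx : ∀ a ∉ S, x a = 0) : Qf M T x = Qf M S x := by
  rw [Qf, Qf]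
  rw [← Finset.sum_subset hST (fun a _ ha => by simp [hx a ha])]
  refine Finset.sum_congr rfl fun a _ => ?_
  exact (Finset.sum_subset hST (fun b _ hb => by simp [hx b hb])).symm

theorem Qf_univ (M : Matrix (Fin n) (Fin n) ℂ) (x : Fin n → ℂ) :
    Qf M Finset.univ x = star x ⬝ᵥ (M *ᵥ x) := by
  rw [Qf, dotProduct]
  refine Finset.sum_congr rfl fun a _ => ?_
  rw [mulVec, dotProduct, Finset.mul_sum]
  rfl

/-- extension of a vector on `J` by zero -/
noncomputable def extz (J : Finset (Fin n)) (y : J → ℂ) : Fin n → ℂ :=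
  fun a => if h : a ∈ J then y ⟨a, h⟩ else 0

theorem extz_restrict (J : Finset (Fin n)) (y : J → ℂ) :
    (fun a : J => extz J y a) = y := by
  funext a; simp [extz, a.2]

theorem extz_zero (J : Finset (Fin n)) (y : J → ℂ) : ∀ a ∉ J, extz J y a = 0 :=
  fun a ha => by simp [extz, ha]

theorem psub_posDef {M : Matrix (Fin n) (Fin n) ℂ} (hM : M.PosDef) (J : Finset (Fin n)) :
    (psub M J).PosDef := by
  refine Matrix.PosDef.of_dotProduct_mulVec_pos ?_ ?_
  · exact hM.isHermitian.submatrix _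
  · intro y hy
    set x := extz J y with hx
    have hres : (fun a : J => x a) = y := extz_restrict J y
    have hxne : x ≠ 0 := by
      intro h
      apply hy
      rw [← hres, h]
      rfl
    have := hM.dotProduct_mulVec_pos hxne
    rw [← Qf_univ M x, Qf_subset M (Finset.subset_univ J) x (extz_zero J y)] at this
    rw [← quad_psub M J x] at this
    rw [hres] at this
    exact this

theorem sigma_re_pos {M : Matrix (Fin n) (Fin n) ℂ} (hM : M.PosDef) (J : Finset (Fin n))
    {i : Fin n} (hi : i ∈ J) : 0 < ((psub M J)⁻¹ ⟨i, hi⟩ ⟨i, hi⟩).re :=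
  (inv_diag (psub_posDef hM J) _).1

theorem sigma_mono {M : Matrix (Fin n) (Fin n) ℂ} (hM : M.PosDef)
    {S T : Finset (Fin n)} (hST : S ⊆ T) {i : Fin n} (hiS : i ∈ S) :
    ((psub M S)⁻¹ ⟨i, hiS⟩ ⟨i, hiS⟩).re ≤ ((psub M T)⁻¹ ⟨i, hST hiS⟩ ⟨i, hST hiS⟩).re := by
  have hB := psub_posDef hM S
  have hC := psub_posDef hM T
  obtain ⟨xB, hx1, hx2⟩ := exists_quad_eq hB ⟨i, hiS⟩
  set x := extz S xB with hxdef
  have hres : (fun a : S => x a) = xB := extz_restrict S xB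
  have hq : star (fun a : T => x a) ⬝ᵥ (psub M T *ᵥ fun a : T => x a)
      = (((1 : ℝ) / ((psub M S)⁻¹ ⟨i, hiS⟩ ⟨i, hiS⟩).re : ℝ) : ℂ) := by
    rw [quad_psub, Qf_subset M hST x (extz_zero S xB), ← quad_psub, hres, hx2]
  have hxi : (fun a : T => x a) ⟨i, hST hiS⟩ = 1 := by
    show x i = 1
    have : x i = xB ⟨i, hiS⟩ := congrFun hres ⟨i, hiS⟩
    rw [this, hx1]
  have hkey := one_div_le_quad hC ⟨i, hST hiS⟩ (fun a : T => x a) hxi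
  rw [hq, Complex.ofReal_re] at hkey
  have hSpos := sigma_re_pos hM S hiS
  have hTpos := sigma_re_pos hM T (hST hiS)
  exact (one_div_le_one_div hTpos hSpos).mp hkey

theorem one_div_sigma_le_diag {M : Matrix (Fin n) (Fin n) ℂ} (hM : M.PosDef)
    (J : Finset (Fin n)) {i : Fin n} (hi : i ∈ J) :
    1 / ((psub M J)⁻¹ ⟨i, hi⟩ ⟨i, hi⟩).re ≤ (M i i).re := by
  have hA := psub_posDef hM J
  have h := one_div_le_quad hA ⟨i, hi⟩ (Pi.single ⟨i, hi⟩ 1) (Pi.single_eq_same _ _)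
  rw [mulVec_single] at h
  have : star ((Pi.single (⟨i, hi⟩ : J) (1:ℂ)) : J → ℂ)
      ⬝ᵥ (MulOpposite.op (1:ℂ) • (psub M J).col ⟨i, hi⟩) = M i i := by
    rw [star_single, single_dotProduct]
    simp [psub]
  rwa [this] at h


theorem iic_self (i : Fin n) : i ∈ Finset.Iic i := Finset.mem_Iic.mpr le_rfl

/-- the i-th "pivot" inverse entry -/
noncomputable def tau (M : Matrix (Fin n) (Fin n) ℂ) (i : Fin n) : ℂ :=
  (psub M (Finset.Iic i))⁻¹ ⟨i, iic_self i⟩ ⟨i, iic_self i⟩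

theorem pivot_eq {M : Matrix (Fin n) (Fin n) ℂ} (hM : M.PosDef) (i : Fin n) :
    (psub M (Finset.Iic i)).det * tau M i = (psub M (Finset.Iio i)).det := by
  rw [tau, det_mul_inv_diag (psub_posDef hM _) ⟨i, iic_self i⟩]
  let eqv : {j : ↥(Finset.Iic i) // j ≠ (⟨i, iic_self i⟩ : ↥(Finset.Iic i))}
      ≃ ↥(Finset.Iio i) :=
    { toFun := fun j => ⟨((j : ↥(Finset.Iic i)) : Fin n),
        Finset.mem_Iio.mpr (lt_of_le_of_ne (Finset.mem_Iic.mp (j : ↥(Finset.Iic i)).2)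
          (fun h => j.2 (Subtype.ext h)))⟩
      invFun := fun j => ⟨⟨(j : Fin n),
          Finset.mem_Iic.mpr (le_of_lt (Finset.mem_Iio.mp j.2))⟩,
        fun h => absurd (congrArg (fun z : ↥(Finset.Iic i) => (z : Fin n)) h)
          (ne_of_lt (Finset.mem_Iio.mp j.2))⟩
      left_inv := fun j => rfl
      right_inv := fun j => rfl }
  rw [← Matrix.det_submatrix_equiv_self eqv (psub M (Finset.Iio i))]
  congr 1

/-- indices with value less than `k` -/
noncomputable def Jlt (n k : ℕ) : Finset (Fin n) := Finset.filter (fun j => (j : ℕ) < k) Finset.univ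

theorem telescope {M : Matrix (Fin n) (Fin n) ℂ} (hM : M.PosDef) :
    ∀ k, k ≤ n → (psub M (Jlt n k)).det *
      ∏ i ∈ Finset.filter (fun i : Fin n => (i : ℕ) < k) Finset.univ, tau M i = 1 := by
  intro k
  induction k with
  | zero =>
    intro _
    haveI : IsEmpty ↥(Jlt n 0) := by
      constructor; rintro ⟨a, ha⟩; simp [Jlt] at ha
    rw [Matrix.det_isEmpty]
    have : Finset.filter (fun i : Fin n => (i : ℕ) < 0) Finset.univ = ∅ := by
      ext j; simp
    rw [this, Finset.prod_empty, one_mul]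
  | succ k ih =>
    intro hk1
    have hk : k < n := hk1
    set i : Fin n := ⟨k, hk⟩ with hi
    have hJ1 : Jlt n (k+1) = Finset.Iic i := by
      ext j; simp [Jlt, Finset.mem_Iic, Fin.le_def, Nat.lt_succ_iff, hi, -Fin.val_fin_le]
    have hJ0 : Jlt n k = Finset.Iio i := by
      ext j; simp [Jlt, Finset.mem_Iio, Fin.lt_def, hi, -Fin.val_fin_lt]
    have hfil : Finset.filter (fun j : Fin n => (j : ℕ) < k + 1) Finset.univ
        = insert i (Finset.filter (fun j : Fin n => (j : ℕ) < k) Finset.univ) := by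
      ext j
      simp only [Finset.mem_filter, Finset.mem_univ, true_and, Finset.mem_insert]
      rw [Nat.lt_succ_iff_lt_or_eq]
      constructor
      · rintro (h | h)
        · exact Or.inr h
        · exact Or.inl (Fin.ext h)
      · rintro (h | h)
        · exact Or.inr (by rw [h])
        · exact Or.inl h
    have hnotmem : i ∉ Finset.filter (fun j : Fin n => (j : ℕ) < k) Finset.univ := by
      simp [hi]
    rw [hJ1, hfil, Finset.prod_insert hnotmem, ← mul_assoc,
      mul_comm (psub M (Finset.Iic i)).det (tau M i), mul_comm (tau M i) _,
      pivot_eq hM i, ← hJ0]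
    exact ih (le_of_lt hk)

theorem det_eq_prod_tau {M : Matrix (Fin n) (Fin n) ℂ} (hM : M.PosDef) :
    M.det * ∏ i : Fin n, tau M i = 1 := by
  have h := telescope hM n le_rfl
  have hJ : Jlt n n = Finset.univ := by
    ext j; simp [Jlt, j.2]
  have hfil : Finset.filter (fun i : Fin n => (i : ℕ) < n) Finset.univ = Finset.univ := by
    ext j; simp [j.2]
  rw [hJ, hfil] at h
  have hdet : (psub M Finset.univ).det = M.det := by
    rw [← Matrix.det_submatrix_equiv_self
      (Equiv.subtypeUnivEquiv (fun x : Fin n => Finset.mem_univ x)) M]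
    congr 1
  rw [hdet] at h
  exact h

theorem det_re_eq {M : Matrix (Fin n) (Fin n) ℂ} (hM : M.PosDef) :
    M.det.re = ∏ i : Fin n, 1 / (tau M i).re := by
  have h := det_eq_prod_tau hM
  have hre : ∀ i : Fin n, tau M i = (((tau M i).re : ℝ) : ℂ) := fun i => by
    obtain ⟨_, him⟩ := inv_diag (psub_posDef hM (Finset.Iic i)) (⟨i, iic_self i⟩ : ↥(Finset.Iic i))
    apply Complex.ext
    · simp
    · simpa [tau] using him
  have hpos : ∀ i : Fin n, 0 < (tau M i).re := fun i =>
    (inv_diag (psub_posDef hM (Finset.Iic i)) (⟨i, iic_self i⟩ : ↥(Finset.Iic i))).1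
  have hprod : (∏ i : Fin n, tau M i)
      = (((∏ i : Fin n, (tau M i).re : ℝ)) : ℂ) := by
    rw [Complex.ofReal_prod]
    exact Finset.prod_congr rfl fun i _ => hre i
  rw [hprod] at h
  have hdet : M.det = ((((∏ i : Fin n, (tau M i).re)⁻¹ : ℝ)) : ℂ) := by
    rw [Complex.ofReal_inv]
    exact eq_inv_of_mul_eq_one_left h
  rw [hdet, Complex.ofReal_re, ← Finset.prod_inv_distrib]
  exact Finset.prod_congr rfl fun i _ => (one_div _).symm

end Stmt11Aux
open Matrix
open scoped ComplexOrder

/-- For a principal submatrix `M[J,J]` of `M` and an index `i ∈ J`, the diagonal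
entry of `(M[J,J])⁻¹` in the position corresponding to `i`. -/
noncomputable def sigmaEntry {n : ℕ} (M : Matrix (Fin n) (Fin n) ℂ)
    (J : Finset (Fin n)) (i : Fin n) (hi : i ∈ J) : ℂ :=
  (M.submatrix (fun a : J => (a : Fin n)) (fun a : J => (a : Fin n)))⁻¹ ⟨i, hi⟩ ⟨i, hi⟩

/-- **Corollary (bounds for sparse inverse approximations).**
Let `M` be Hermitian positive definite, and for each `i` let `J_i ⊆ {1,…,i}`
with `i ∈ J_i`, and let `σ_i` be the diagonal entry of `(M[J_i,J_i])⁻¹`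
corresponding to `i`. Then `det M ≤ Π_i (1/σ_i) ≤ Π_i m_{ii}`. -/
theorem stmt11 {n : ℕ}
    (M : Matrix (Fin n) (Fin n) ℂ) (hM : M.PosDef)
    (J : Fin n → Finset (Fin n))
    (hmem : ∀ i : Fin n, i ∈ J i)
    (hle : ∀ i : Fin n, ∀ j ∈ J i, j ≤ i) :
    M.det.re ≤ ∏ i : Fin n, (1 / (sigmaEntry M (J i) i (hmem i)).re) ∧
      ∏ i : Fin n, (1 / (sigmaEntry M (J i) i (hmem i)).re) ≤
        ∏ i : Fin n, (M i i).re := by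
  have hsig : ∀ i : Fin n, sigmaEntry M (J i) i (hmem i)
      = (Stmt11Aux.psub M (J i))⁻¹ ⟨i, hmem i⟩ ⟨i, hmem i⟩ := fun i => rfl
  have hsigpos : ∀ i : Fin n, 0 < (sigmaEntry M (J i) i (hmem i)).re := fun i => by
    rw [hsig i]; exact Stmt11Aux.sigma_re_pos hM (J i) (hmem i)
  constructor
  · rw [Stmt11Aux.det_re_eq hM]
    apply Finset.prod_le_prod
    · intro i _
      have := (Stmt11Aux.inv_diag (Stmt11Aux.psub_posDef hM (Finset.Iic i))
        (⟨i, Stmt11Aux.iic_self i⟩ : ↥(Finset.Iic i))).1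
      exact le_of_lt (one_div_pos.mpr this)
    · intro i _
      have hsub : J i ⊆ Finset.Iic i := fun j hj => Finset.mem_Iic.mpr (hle i j hj)
      have hmono := Stmt11Aux.sigma_mono hM hsub (hmem i)
      rw [hsig i]
      exact one_div_le_one_div_of_le (Stmt11Aux.sigma_re_pos hM (J i) (hmem i)) hmono
  · apply Finset.prod_le_prod
    · intro i _
      exact le_of_lt (one_div_pos.mpr (hsigpos i))
    · intro i _
      rw [hsig i]
      exact Stmt11Aux.one_div_sigma_le_diag hM (J i) (hmem i)
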